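/- Define D(ξ,η) = 9(ξ+η)² − 4ξη and, for (ξ,η) ≠ (0,0), the complex-valued symbols A^h(ξ,η) = i(3ξ³ − (3/2)ξ²η − 5ξη² − (9/2)η³)/D(ξ,η), B^h(ξ,η) = −i(ξ+η)·((9/4)(ξ+η)² − 2ξη)/D(ξ,η), C^h(ξ,η) = −(3/2)i(ξ+η)²/D(ξ,η). Then for all (ξ,η) ≠ (0,0): (a) 2η·B^h(ξ,η) − 2ξ²·C^h(ξ,η) − (ξ+η)·A^h(ξ,η) = 0; (b) (1/2)(ξ·A^h(ξ,η) + η·A^h(η,ξ)) + (ξ+η)²·C^h(ξ,η) = −i·ξη; (c) (1/2)(η²·A^h(ξ,η) + ξ²·A^h(η,ξ)) − (ξ+η)²·B^h(ξ,η) = (3i/4)·ξη·(ξ+η). -/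

import Mathlib

open Complex


lemma capillary_D_ne_zero (ξ η : ℝ) (h : (ξ, η) ≠ (0, 0)) :
    (9 * ((ξ:ℂ) + (η:ℂ))^2 - 4 * (ξ:ℂ) * (η:ℂ)) ≠ 0 := by
  have hre : (9 * (ξ + η)^2 - 4 * ξ * η : ℝ) ≠ 0 := by
    have h2 : ξ ≠ 0 ∨ η ≠ 0 := by
      by_contra hc
      push_neg at hc
      exact h (by simp [hc.1, hc.2])
    have : (0:ℝ) < 9 * (ξ + η)^2 - 4 * ξ * η := by
      rcases h2 with h2 | h2
      · have := mul_self_pos.mpr h2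
        nlinarith [sq_nonneg (ξ + η), sq_nonneg η]
      · have := mul_self_pos.mpr h2
        nlinarith [sq_nonneg (ξ + η), sq_nonneg ξ]
    linarith
  have : ((9 * (ξ + η)^2 - 4 * ξ * η : ℝ) : ℂ) ≠ 0 := by
    exact_mod_cast Complex.ofReal_ne_zero.mpr hre
  convert this using 1
  push_cast
  ring

/-- The symbol equations defining the holomorphic part of the quadratic normal form
transformation for capillary water waves: with `D(ξ,η) = 9(ξ+η)² − 4ξη` and the symbols
`A^h`, `B^h`, `C^h` as in the paper, the three symbol identities hold away from the origin. -/
theorem capillary_holomorphic_normal_form_symbols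
    (Ah Bh Ch : ℝ → ℝ → ℂ)
    (hAh : ∀ ξ η : ℝ, (ξ, η) ≠ (0, 0) →
      Ah ξ η = Complex.I * (3 * (ξ:ℂ)^3 - (3/2) * (ξ:ℂ)^2 * (η:ℂ)
          - 5 * (ξ:ℂ) * (η:ℂ)^2 - (9/2) * (η:ℂ)^3)
        / (9 * ((ξ:ℂ) + (η:ℂ))^2 - 4 * (ξ:ℂ) * (η:ℂ)))
    (hBh : ∀ ξ η : ℝ, (ξ, η) ≠ (0, 0) →
      Bh ξ η = -Complex.I * ((ξ:ℂ) + (η:ℂ)) * ((9/4) * ((ξ:ℂ) + (η:ℂ))^2 - 2 * (ξ:ℂ) * (η:ℂ))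
        / (9 * ((ξ:ℂ) + (η:ℂ))^2 - 4 * (ξ:ℂ) * (η:ℂ)))
    (hCh : ∀ ξ η : ℝ, (ξ, η) ≠ (0, 0) →
      Ch ξ η = -(3/2) * Complex.I * ((ξ:ℂ) + (η:ℂ))^2
        / (9 * ((ξ:ℂ) + (η:ℂ))^2 - 4 * (ξ:ℂ) * (η:ℂ))) :
    ∀ ξ η : ℝ, (ξ, η) ≠ (0, 0) →
      (2 * (η:ℂ) * Bh ξ η - 2 * (ξ:ℂ)^2 * Ch ξ η - ((ξ:ℂ) + (η:ℂ)) * Ah ξ η = 0) ∧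
      ((1/2) * ((ξ:ℂ) * Ah ξ η + (η:ℂ) * Ah η ξ) + ((ξ:ℂ) + (η:ℂ))^2 * Ch ξ η
        = -Complex.I * (ξ:ℂ) * (η:ℂ)) ∧
      ((1/2) * ((η:ℂ)^2 * Ah ξ η + (ξ:ℂ)^2 * Ah η ξ) - ((ξ:ℂ) + (η:ℂ))^2 * Bh ξ η
        = (3 * Complex.I / 4) * (ξ:ℂ) * (η:ℂ) * ((ξ:ℂ) + (η:ℂ))) := by
  intro ξ η h
  have h' : (η, ξ) ≠ (0, 0) := by
    simpa [Prod.ext_iff, and_comm] using h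
  have hD := capillary_D_ne_zero ξ η h
  have hD' := capillary_D_ne_zero η ξ h'
  rw [hAh ξ η h, hAh η ξ h', hBh ξ η h, hCh ξ η h]
  have hrw : (9 * ((η:ℂ) + (ξ:ℂ))^2 - 4 * (η:ℂ) * (ξ:ℂ))
      = (9 * ((ξ:ℂ) + (η:ℂ))^2 - 4 * (ξ:ℂ) * (η:ℂ)) := by ring
  rw [hrw]
  refine ⟨?_, ?_, ?_⟩
  · field_simp
    ring
  · generalize hE : (9 * ((ξ:ℂ) + (η:ℂ))^2 - 4 * (ξ:ℂ) * (η:ℂ)) = E at hD ⊢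
    field_simp
    subst hE
    ring
  · generalize hE : (9 * ((ξ:ℂ) + (η:ℂ))^2 - 4 * (ξ:ℂ) * (η:ℂ)) = E at hD ⊢
    field_simp
    subst hE
    ring
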